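/- For every real q ≥ 2, ∏_{i=1}^∞ (1 - q^{-i}) > 1 - q^{-1} - q^{-2} + q^{-5}. -/

import Mathlib

open Finset Filter

private lemma weier (a : ℕ → ℝ) (h0 : ∀ i, 0 ≤ a i) (h1 : ∀ i, a i ≤ 1) (m : ℕ) :
    1 - ∑ i ∈ Finset.range m, a i ≤ ∏ i ∈ Finset.range m, (1 - a i) := by
  induction m with
  | zero => simp
  | succ m ih =>
    rw [Finset.prod_range_succ, Finset.sum_range_succ]
    have hS : 0 ≤ ∑ i ∈ Finset.range m, a i := Finset.sum_nonneg fun i _ => h0 i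
    nlinarith [h0 m, h1 m, hS, ih]

/-- For every real `q ≥ 2`, `∏_{i=1}^∞ (1 - q^{-i}) > 1 - q⁻¹ - q⁻² + q⁻⁵`. -/
theorem stmt12 (q : ℝ) (hq : 2 ≤ q) :
    1 - q⁻¹ - (q ^ 2)⁻¹ + (q ^ 5)⁻¹ < ∏' i : ℕ, (1 - (q ^ (i + 1))⁻¹) := by
  simp only [← inv_pow]
  set x : ℝ := q⁻¹ with hxdef
  have hx0 : 0 < x := inv_pos.2 (by linarith)
  have hx : x ≤ 1 / 2 := by
    have := inv_anti₀ (by norm_num : (0:ℝ) < 2) hq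
    simpa using this
  have hx1 : x < 1 := by linarith
  set f : ℕ → ℝ := fun i => 1 - x ^ (i + 1) with hfdef
  have hpow : ∀ i : ℕ, x ^ (i + 1) ≤ 1 / 2 := by
    intro i
    calc x ^ (i + 1) ≤ x ^ 1 := pow_le_pow_of_le_one hx0.le hx1.le (by omega)
    _ ≤ 1 / 2 := by simpa using hx
  have hpow0 : ∀ i : ℕ, 0 < x ^ (i + 1) := fun i => pow_pos hx0 _
  have hf_pos : ∀ i, 0 < f i := fun i => by have := hpow i; simp only [hfdef]; linarith
  have hgs : Summable fun i : ℕ => x ^ i := summable_geometric_of_lt_one hx0.le hx1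
  -- summability of logs
  have hsum : Summable fun i => Real.log (f i) := by
    have hgeo : Summable fun i : ℕ => 2 * x ^ (i + 1) := by
      apply Summable.congr (hgs.mul_left (2 * x))
      intro i; ring
    apply Summable.of_norm_bounded hgeo
    intro i
    set t : ℝ := x ^ (i + 1) with htdef
    have ht0 : 0 < t := hpow0 i
    have ht : t ≤ 1 / 2 := hpow i
    have h1t : (0:ℝ) < 1 - t := by linarith
    have hlog_nonpos : Real.log (1 - t) ≤ 0 := Real.log_nonpos (by linarith) (by linarith)
    have hlog : Real.log ((1 - t)⁻¹) ≤ (1 - t)⁻¹ - 1 :=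
      Real.log_le_sub_one_of_pos (inv_pos.2 h1t)
    have hinv2 : (1 - t)⁻¹ ≤ 2 := by
      have := inv_anti₀ (by norm_num : (0:ℝ) < 1/2) (by linarith : 1/2 ≤ 1 - t)
      simpa using this
    have heq : (1 - t)⁻¹ - 1 = t * (1 - t)⁻¹ := by field_simp; ring
    have hle : -Real.log (1 - t) ≤ 2 * t := by
      rw [← Real.log_inv]
      calc Real.log ((1 - t)⁻¹) ≤ t * (1 - t)⁻¹ := by rw [← heq]; exact hlog
      _ ≤ 2 * t := by nlinarith [inv_pos.2 h1t]
    show ‖Real.log (1 - t)‖ ≤ 2 * t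
    rw [Real.norm_eq_abs, abs_of_nonpos hlog_nonpos]
    exact hle
  -- multipliability
  have hmult : Multipliable f := by
    have := Real.multipliable_of_summable_log hf_pos hsum
    simpa using this
  have htend : Tendsto (fun n => ∏ i ∈ Finset.range n, f i) atTop (nhds (∏' i, f i)) :=
    hmult.hasProd.tendsto_prod_nat
  have h1x : (0:ℝ) < 1 - x := by linarith
  have hinvx : (1 - x)⁻¹ ≤ 2 := by
    have := inv_anti₀ (by norm_num : (0:ℝ) < 1/2) (by linarith : 1/2 ≤ 1 - x)
    simpa using this
  have hinvx0 : 0 < (1 - x)⁻¹ := inv_pos.2 h1x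
  set c : ℝ := (1 - x) * (1 - x ^ 2) * (1 - x ^ 3) * (1 - x ^ 4 * (1 - x)⁻¹) with hcdef
  have hx4 : x ^ 4 ≤ (1/2:ℝ) ^ 4 := pow_le_pow_left₀ hx0.le hx 4
  have hc_le : c ≤ ∏' i, f i := by
    refine ge_of_tendsto htend (eventually_atTop.2 ⟨3, fun n hn => ?_⟩)
    obtain ⟨m, rfl⟩ := Nat.exists_eq_add_of_le hn
    rw [Finset.prod_range_add]
    have hhead : ∏ i ∈ Finset.range 3, f i = (1 - x) * (1 - x ^ 2) * (1 - x ^ 3) := by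
      simp [hfdef, Finset.prod_range_succ]
      try ring
    have hhead_pos : 0 < ∏ i ∈ Finset.range 3, f i :=
      Finset.prod_pos fun i _ => hf_pos i
    have htail : 1 - x ^ 4 * (1 - x)⁻¹ ≤ ∏ i ∈ Finset.range m, f (3 + i) := by
      have h1 : ∀ i ∈ Finset.range m, f (3 + i) = 1 - x ^ (i + 4) := by
        intro i _; simp only [hfdef]; ring_nf
      rw [Finset.prod_congr rfl h1]
      have hw := weier (fun i => x ^ (i + 4)) (fun i => (pow_pos hx0 _).le)
        (fun i => pow_le_one₀ hx0.le hx1.le) m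
      refine le_trans ?_ hw
      have hs4 : ∑ i ∈ Finset.range m, x ^ (i + 4) ≤ x ^ 4 * (1 - x)⁻¹ := by
        have h2 : ∑ i ∈ Finset.range m, x ^ (i + 4) = x ^ 4 * ∑ i ∈ Finset.range m, x ^ i := by
          rw [Finset.mul_sum]
          exact Finset.sum_congr rfl fun i _ => by rw [pow_add]; ring
        rw [h2]
        have h3 : ∑ i ∈ Finset.range m, x ^ i ≤ (1 - x)⁻¹ := by
          have := hgs.sum_le_tsum (Finset.range m) (fun i _ => (pow_pos hx0 i).le)
          rwa [tsum_geometric_of_lt_one hx0.le hx1] at this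
        exact mul_le_mul_of_nonneg_left h3 (by positivity)
      linarith
    calc c = (∏ i ∈ Finset.range 3, f i) * (1 - x ^ 4 * (1 - x)⁻¹) := by rw [hhead, hcdef]
    _ ≤ (∏ i ∈ Finset.range 3, f i) * ∏ i ∈ Finset.range m, f (3 + i) :=
        mul_le_mul_of_nonneg_left htail hhead_pos.le
  refine lt_of_lt_of_le ?_ hc_le
  have hc : c = (1 - x ^ 2) * (1 - x ^ 3) * (1 - x - x ^ 4) := by
    rw [hcdef]; field_simp
  rw [hc]
  have h7 : 0 < x ^ 7 * (1 - x ^ 2) := by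
    have : 0 < 1 - x ^ 2 := by nlinarith
    positivity
  nlinarith [h7]
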